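/- Continuous energy estimate with weakly enforceable Robin/Neumann boundary conditions: for every t ∈ [0,T], ∫₀¹ u(x,t)² dx + 2 ∫₀ᵗ ∫₀¹ ε(x,s)·(∂ₓu(x,s))² dx ds ≤ ∫₀¹ u(x,0)² dx; in particular the L² norm of the solution at time t is bounded by that of the initial data. -/

import Mathlib

open MeasureTheory Set Metric intervalIntegral

theorem stmt1 (a T : ℝ) (ha : 0 ≤ a) (hT : 0 < T) (u ε : ℝ × ℝ → ℝ) (s : Set (ℝ × ℝ))
    (hs : IsOpen s) (hsub : Set.Icc (0:ℝ) 1 ×ˢ Set.Icc (0:ℝ) T ⊆ s)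
    (hu : ContDiffOn ℝ 2 u s) (hε : ContDiffOn ℝ 1 ε s)
    (hεnn : ∀ q ∈ Set.Icc (0:ℝ) 1 ×ˢ Set.Icc (0:ℝ) T, 0 ≤ ε q)
    (hpde : ∀ x ∈ Set.Icc (0:ℝ) 1, ∀ t ∈ Set.Icc (0:ℝ) T,
      deriv (fun τ => u (x, τ)) t + a * deriv (fun y => u (y, t)) x
        = deriv (fun y => ε (y, t) * deriv (fun z => u (z, t)) y) x)
    (hrobin : ∀ t ∈ Set.Icc (0:ℝ) T,
      a * u (0, t) - ε (0, t) * deriv (fun y => u (y, t)) 0 = 0)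
    (hneumann : ∀ t ∈ Set.Icc (0:ℝ) T,
      ε (1, t) * deriv (fun y => u (y, t)) 1 = 0) :
    ∀ t ∈ Set.Icc (0:ℝ) T,
      (∫ x in (0:ℝ)..1, (u (x, t))^2)
        + 2 * ∫ τ in (0:ℝ)..t, (∫ x in (0:ℝ)..1, ε (x, τ) * (deriv (fun y => u (y, τ)) x)^2)
      ≤ ∫ x in (0:ℝ)..1, (u (x, 0))^2 := by
  -- derivative notations
  set U₁ : ℝ × ℝ → ℝ := fun q => fderiv ℝ u q (1, 0) with hU₁def
  set U₂ : ℝ × ℝ → ℝ := fun q => fderiv ℝ u q (0, 1) with hU₂def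
  set F : ℝ × ℝ → ℝ := fun q => ε q * U₁ q with hFdef
  set Fx : ℝ × ℝ → ℝ := fun q => fderiv ℝ F q (1, 0) with hFxdef
  -- differentiability of u on s
  have hud : ∀ q ∈ s, DifferentiableAt ℝ u q := fun q hq =>
    (hu.contDiffAt (hs.mem_nhds hq)).differentiableAt (by norm_num)
  -- partial derivatives of u
  have hX : ∀ x t : ℝ, (x, t) ∈ s → HasDerivAt (fun y => u (y, t)) (U₁ (x, t)) x := by
    intro x t hq
    have h1 : HasDerivAt (fun y : ℝ => (y, t)) ((1 : ℝ), (0 : ℝ)) x :=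
      HasDerivAt.prodMk (hasDerivAt_id x) (hasDerivAt_const x t)
    exact (hud _ hq).hasFDerivAt.comp_hasDerivAt x h1
  have hTt : ∀ x t : ℝ, (x, t) ∈ s → HasDerivAt (fun τ => u (x, τ)) (U₂ (x, t)) t := by
    intro x t hq
    have h1 : HasDerivAt (fun τ : ℝ => (x, τ)) ((0 : ℝ), (1 : ℝ)) t :=
      HasDerivAt.prodMk (hasDerivAt_const t x) (hasDerivAt_id t)
    exact (hud _ hq).hasFDerivAt.comp_hasDerivAt t h1
  -- smoothness of the partial derivative
  have hfd1 : ContDiffOn ℝ 1 (fderiv ℝ u) s := hu.fderiv_of_isOpen hs (by norm_num)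
  have hU₁c : ContDiffOn ℝ 1 U₁ s := hfd1.clm_apply contDiffOn_const
  have hU₂cont : ContinuousOn U₂ s := hfd1.continuousOn.clm_apply continuousOn_const
  have hFc : ContDiffOn ℝ 1 F s := hε.mul hU₁c
  have hFd : ∀ q ∈ s, DifferentiableAt ℝ F q := fun q hq =>
    (hFc.contDiffAt (hs.mem_nhds hq)).differentiableAt one_ne_zero
  have hXF : ∀ x t : ℝ, (x, t) ∈ s → HasDerivAt (fun y => F (y, t)) (Fx (x, t)) x := by
    intro x t hq
    have h1 : HasDerivAt (fun y : ℝ => (y, t)) ((1 : ℝ), (0 : ℝ)) x :=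
      HasDerivAt.prodMk (hasDerivAt_id x) (hasDerivAt_const x t)
    exact (hFd _ hq).hasFDerivAt.comp_hasDerivAt x h1
  have hFxcont : ContinuousOn Fx s := by
    have := hFc.continuousOn_fderiv_of_isOpen hs le_rfl
    exact this.clm_apply continuousOn_const
  have hU₁cont : ContinuousOn U₁ s := hU₁c.continuousOn
  have hFcont : ContinuousOn F s := hFc.continuousOn
  have hucont : ContinuousOn u s := hu.continuousOn
  have hεcont : ContinuousOn ε s := hε.continuousOn
  -- rewriting the PDE in terms of total derivatives
  have hpde' : ∀ x ∈ Set.Icc (0:ℝ) 1, ∀ t ∈ Set.Icc (0:ℝ) T,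
      U₂ (x, t) = Fx (x, t) - a * U₁ (x, t) := by
    intro x hx t ht
    have hq : (x, t) ∈ s := hsub ⟨hx, ht⟩
    have e1 : deriv (fun τ => u (x, τ)) t = U₂ (x, t) := (hTt x t hq).deriv
    have e2 : deriv (fun y => u (y, t)) x = U₁ (x, t) := (hX x t hq).deriv
    have e3 : deriv (fun y => ε (y, t) * deriv (fun z => u (z, t)) y) x = Fx (x, t) := by
      have hV : {y : ℝ | (y, t) ∈ s} ∈ nhds x := by
        have : IsOpen {y : ℝ | (y, t) ∈ s} :=
          hs.preimage (by fun_prop : Continuous fun y : ℝ => (y, t))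
        exact this.mem_nhds hq
      have heq : (fun y => ε (y, t) * deriv (fun z => u (z, t)) y) =ᶠ[nhds x]
          (fun y => F (y, t)) := by
        filter_upwards [hV] with y hy
        rw [(hX y t hy).deriv]
      rw [heq.deriv_eq, (hXF x t hq).deriv]
    have := hpde x hx t ht
    rw [e1, e2, e3] at this
    linarith
  -- boundary conditions in terms of F
  have hneum' : ∀ t ∈ Set.Icc (0:ℝ) T, F (1, t) = 0 := by
    intro t ht
    have hq : ((1:ℝ), t) ∈ s := hsub ⟨⟨zero_le_one, le_rfl⟩, ht⟩
    have := hneumann t ht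
    rwa [(hX 1 t hq).deriv] at this
  have hrob' : ∀ t ∈ Set.Icc (0:ℝ) T, F (0, t) = a * u (0, t) := by
    intro t ht
    have hq : ((0:ℝ), t) ∈ s := hsub ⟨⟨le_rfl, zero_le_one⟩, ht⟩
    have := hrobin t ht
    rw [(hX 0 t hq).deriv] at this
    have : ε (0, t) * U₁ (0, t) = a * u (0, t) := by linarith
    simpa [hFdef] using this
  -- a compact neighborhood slab inside s
  obtain ⟨δ, δpos, hδ⟩ :=
    ((isCompact_Icc.prod isCompact_Icc) :
      IsCompact (Set.Icc (0:ℝ) 1 ×ˢ Set.Icc (0:ℝ) T)).exists_thickening_subset_open hs hsub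
  set d : ℝ := δ / 2 with hddef
  have dpos : 0 < d := by positivity
  have hK' : Set.Icc (0:ℝ) 1 ×ˢ Set.Icc (-d) (T + d) ⊆ s := by
    intro p hp
    obtain ⟨hp1, hp2⟩ := hp
    apply hδ
    rw [mem_thickening_iff]
    refine ⟨(p.1, max 0 (min p.2 T)), ⟨hp1, le_max_left _ _, max_le hT.le (min_le_right _ _)⟩, ?_⟩
    have : dist p (p.1, max 0 (min p.2 T)) = dist p.2 (max 0 (min p.2 T)) := by
      rw [Prod.dist_eq]; simp [dist_nonneg]
    rw [this, Real.dist_eq]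
    have h2 : |p.2 - max 0 (min p.2 T)| ≤ d := by
      rcases le_total p.2 0 with h0 | h0
      · rw [min_eq_left (h0.trans hT.le), max_eq_left h0, abs_le]
        constructor <;> [linarith [hp2.1]; linarith]
      · rcases le_total p.2 T with h1 | h1
        · rw [min_eq_left h1, max_eq_right h0]; simp [dpos.le]
        · rw [min_eq_right h1, max_eq_right hT.le, abs_le]
          constructor <;> [linarith; linarith [hp2.2]]
    calc |p.2 - max 0 (min p.2 T)| ≤ d := h2
      _ < δ := by rw [hddef]; linarith
  have hK'c : IsCompact (Set.Icc (0:ℝ) 1 ×ˢ Set.Icc (-d) (T + d)) :=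
    isCompact_Icc.prod isCompact_Icc
  -- uniform bounds on the slab
  obtain ⟨M₁, hM₁⟩ := hK'c.exists_bound_of_continuousOn
    (((continuousOn_const.mul (hucont.mono hK')).mul (hU₂cont.mono hK')) :
      ContinuousOn (fun q => 2 * u q * U₂ q) _)
  obtain ⟨M₂, hM₂⟩ := hK'c.exists_bound_of_continuousOn
    (((hεcont.mono hK').mul ((hU₁cont.mono hK').pow 2)) :
      ContinuousOn (fun q => ε q * U₁ q ^ 2) _)
  -- slice helpers
  have hmemT : Set.Icc (0:ℝ) T ⊆ Set.Icc (-d) (T + d) := fun t ht =>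
    ⟨by linarith [ht.1], by linarith [ht.2]⟩
  have hslice : ∀ (G : ℝ × ℝ → ℝ), ContinuousOn G s → ∀ t ∈ Set.Icc (-d) (T + d),
      ContinuousOn (fun y => G (y, t)) (Set.Icc (0:ℝ) 1) := by
    intro G hG t ht
    exact hG.comp ((Continuous.continuousOn (by fun_prop)) :
      ContinuousOn (fun y : ℝ => (y, t)) _) (fun y hy => hK' ⟨hy, ht⟩)
  -- key differential inequality from integration by parts
  have key : ∀ t ∈ Set.Icc (0:ℝ) T,
      (∫ x in (0:ℝ)..1, 2 * u (x, t) * U₂ (x, t))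
        + 2 * (∫ x in (0:ℝ)..1, ε (x, t) * U₁ (x, t) ^ 2) ≤ 0 := by
    intro t ht
    have ht' : t ∈ Set.Icc (-d) (T + d) := hmemT ht
    have hmem1 : ∀ x ∈ Set.uIcc (0:ℝ) 1, (x, t) ∈ s := by
      intro x hx
      rw [Set.uIcc_of_le zero_le_one] at hx
      exact hK' ⟨hx, ht'⟩
    set g : ℝ → ℝ := fun y => 2 * u (y, t) * F (y, t) - a * u (y, t) ^ 2 with hgdef
    set D : ℝ → ℝ := fun y =>
      (2 * U₁ (y, t) * F (y, t) + 2 * u (y, t) * Fx (y, t))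
        - a * (2 * u (y, t) * U₁ (y, t)) with hDdef
    have hg : ∀ y ∈ Set.uIcc (0:ℝ) 1, HasDerivAt g (D y) y := by
      intro y hy
      have h1 := ((hX y t (hmem1 y hy)).const_mul 2).mul (hXF y t (hmem1 y hy))
      have h2 := ((hX y t (hmem1 y hy)).fun_pow 2).const_mul a
      have h3 := h1.sub h2
      refine h3.congr_deriv ?_
      push_cast
      ring
    have hus := hslice u hucont t ht'
    have hU₁s := hslice U₁ hU₁cont t ht'
    have hFs := hslice F hFcont t ht'
    have hFxs := hslice Fx hFxcont t ht'
    have hεs := hslice ε hεcont t ht'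
    have hDint : IntervalIntegrable D volume 0 1 := by
      apply ContinuousOn.intervalIntegrable
      rw [Set.uIcc_of_le zero_le_one]
      exact (((continuousOn_const.mul hU₁s).mul hFs).add
        ((continuousOn_const.mul hus).mul hFxs)).sub
        (continuousOn_const.mul ((continuousOn_const.mul hus).mul hU₁s))
    have hftc : ∫ y in (0:ℝ)..1, D y = g 1 - g 0 :=
      integral_eq_sub_of_hasDerivAt hg hDint
    have hint2 : IntervalIntegrable (fun x => ε (x, t) * U₁ (x, t) ^ 2) volume 0 1 := by
      apply ContinuousOn.intervalIntegrable
      rw [Set.uIcc_of_le zero_le_one]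
      exact hεs.mul (hU₁s.pow 2)
    have hpt : Set.EqOn (fun x => 2 * u (x, t) * U₂ (x, t))
        (fun x => D x - 2 * (ε (x, t) * U₁ (x, t) ^ 2)) (Set.uIcc (0:ℝ) 1) := by
      intro x hx
      rw [Set.uIcc_of_le zero_le_one] at hx
      simp only
      rw [hpde' x hx t ht]
      simp only [hDdef, hFdef]
      ring
    have e : (∫ x in (0:ℝ)..1, 2 * u (x, t) * U₂ (x, t))
        = (g 1 - g 0) - 2 * ∫ x in (0:ℝ)..1, ε (x, t) * U₁ (x, t) ^ 2 := by
      rw [integral_congr hpt, integral_sub hDint (hint2.const_mul 2), hftc,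
        intervalIntegral.integral_const_mul]
    have hb : g 1 - g 0 = -(a * u (1, t) ^ 2) - a * u (0, t) ^ 2 := by
      simp only [hgdef, hneum' t ht, hrob' t ht]
      ring
    have h1 : 0 ≤ a * u (1, t) ^ 2 := mul_nonneg ha (sq_nonneg _)
    have h2 : 0 ≤ a * u (0, t) ^ 2 := mul_nonneg ha (sq_nonneg _)
    rw [e, hb]
    linarith
  have hIoc : Set.uIoc (0:ℝ) 1 ⊆ Set.Icc (0:ℝ) 1 := by
    rw [Set.uIoc_of_le zero_le_one]
    exact Set.Ioc_subset_Icc_self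
  have hball : ∀ t₀ ∈ Set.Icc (-(d/2)) (T + d/2), ∀ t' ∈ ball t₀ (d/2),
      t' ∈ Set.Icc (-d) (T + d) := by
    intro t₀ h0 t' h'
    have habs : |t' - t₀| < d / 2 := by rwa [mem_ball, Real.dist_eq] at h'
    obtain ⟨ha1, ha2⟩ := abs_lt.mp habs
    exact ⟨by linarith [h0.1], by linarith [h0.2]⟩
  have hTsub : Set.Icc (0:ℝ) T ⊆ Set.Icc (-(d/2)) (T + d/2) := fun t ht =>
    ⟨by linarith [ht.1], by linarith [ht.2]⟩
  -- derivative of the energy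
  have hfder : ∀ t₀ ∈ Set.Icc (0:ℝ) T,
      HasDerivAt (fun t => ∫ x in (0:ℝ)..1, u (x, t) ^ 2)
        (∫ x in (0:ℝ)..1, 2 * u (x, t₀) * U₂ (x, t₀)) t₀ := by
    intro t₀ ht₀
    have ht₀' : t₀ ∈ Set.Icc (-(d/2)) (T + d/2) := hTsub ht₀
    have hres := intervalIntegral.hasDerivAt_integral_of_dominated_loc_of_deriv_le
      (F := fun t x => u (x, t) ^ 2) (F' := fun t x => 2 * u (x, t) * U₂ (x, t))
      (x₀ := t₀) (μ := volume) (a := (0:ℝ)) (b := 1) (bound := fun _ => M₁) (ball_mem_nhds t₀ (half_pos dpos))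
      ?_ ?_ ?_ ?_ ?_ ?_
    · exact hres.2
    · filter_upwards [ball_mem_nhds t₀ (half_pos dpos)] with t' ht'
      exact (((hslice u hucont t' (hball t₀ ht₀' t' ht')).pow 2).mono hIoc).aestronglyMeasurable
        measurableSet_uIoc
    · apply ContinuousOn.intervalIntegrable
      rw [Set.uIcc_of_le zero_le_one]
      exact (hslice u hucont t₀ (hmemT ht₀)).pow 2
    · exact (((continuousOn_const.mul (hslice u hucont t₀ (hmemT ht₀))).mul
        (hslice U₂ hU₂cont t₀ (hmemT ht₀))).mono hIoc).aestronglyMeasurable measurableSet_uIoc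
    · apply MeasureTheory.ae_of_all
      intro x hx t' ht'
      exact hM₁ (x, t') ⟨hIoc hx, hball t₀ ht₀' t' ht'⟩
    · exact intervalIntegrable_const
    · apply MeasureTheory.ae_of_all
      intro x hx t' ht'
      have hmem : (x, t') ∈ s := hK' ⟨hIoc hx, hball t₀ ht₀' t' ht'⟩
      have h := (hTt x t' hmem).fun_pow 2
      refine h.congr_deriv ?_
      push_cast
      ring
  -- continuity of the dissipation integral
  set I : ℝ → ℝ := fun τ => ∫ x in (0:ℝ)..1, ε (x, τ) * U₁ (x, τ) ^ 2 with hIdef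
  have hIcont : ∀ t₀ ∈ Set.Icc (-(d/2)) (T + d/2), ContinuousAt I t₀ := by
    intro t₀ ht₀
    apply intervalIntegral.continuousAt_of_dominated_interval
      (bound := fun _ => M₂) ?_ ?_ intervalIntegrable_const ?_
    · filter_upwards [ball_mem_nhds t₀ (half_pos dpos)] with t' ht'
      exact (((hslice ε hεcont t' (hball t₀ ht₀ t' ht')).mul
        ((hslice U₁ hU₁cont t' (hball t₀ ht₀ t' ht')).pow 2)).mono hIoc).aestronglyMeasurable
        measurableSet_uIoc
    · filter_upwards [ball_mem_nhds t₀ (half_pos dpos)] with t' ht'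
      apply MeasureTheory.ae_of_all
      intro x hx
      exact hM₂ (x, t') ⟨hIoc hx, hball t₀ ht₀ t' ht'⟩
    · apply MeasureTheory.ae_of_all
      intro x hx
      have hmem : (x, t₀) ∈ s := hK' ⟨hIoc hx, hball t₀ ht₀ t₀ (mem_ball_self (half_pos dpos))⟩
      have hc : ContinuousAt (fun q : ℝ × ℝ => ε q * U₁ q ^ 2) (x, t₀) :=
        ((hεcont.continuousAt (hs.mem_nhds hmem)).mul
          ((hU₁cont.continuousAt (hs.mem_nhds hmem)).pow 2))
      exact hc.comp ((by fun_prop : Continuous fun t : ℝ => (x, t)).continuousAt)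
  have hIcontOn : ContinuousOn I (Set.Icc (-(d/2)) (T + d/2)) := fun τ hτ =>
    (hIcont τ hτ).continuousWithinAt
  -- the primitive of I
  set J : ℝ → ℝ := fun r => ∫ τ in (0:ℝ)..r, I τ with hJdef
  have hJder : ∀ t ∈ Set.Icc (0:ℝ) T, HasDerivAt J (I t) t := by
    intro t ht
    have hII : IntervalIntegrable I volume 0 t := by
      apply ContinuousOn.intervalIntegrable
      apply hIcontOn.mono
      rw [Set.uIcc_of_le ht.1]
      exact fun τ hτ => hTsub ⟨hτ.1, hτ.2.trans ht.2⟩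
    apply intervalIntegral.integral_hasDerivAt_right hII
    · exact ⟨Set.Ioo (-(d/2)) (T + d/2), Ioo_mem_nhds (by linarith [ht.1]) (by linarith [ht.2]),
        ((hIcontOn.mono Set.Ioo_subset_Icc_self).aestronglyMeasurable measurableSet_Ioo)⟩
    · exact hIcont t (hTsub ht)
  set h : ℝ → ℝ := fun t => (∫ x in (0:ℝ)..1, u (x, t) ^ 2) + 2 * J t with hhdef
  have hhder : ∀ t ∈ Set.Icc (0:ℝ) T,
      HasDerivAt h ((∫ x in (0:ℝ)..1, 2 * u (x, t) * U₂ (x, t)) + 2 * I t) t :=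
    fun t ht => (hfder t ht).add ((hJder t ht).const_mul 2)
  have hmono : AntitoneOn h (Set.Icc (0:ℝ) T) := by
    apply antitoneOn_of_deriv_nonpos (convex_Icc 0 T)
    · exact fun t ht => (hhder t ht).continuousAt.continuousWithinAt
    · rw [interior_Icc]
      exact fun t ht =>
        ((hhder t (Set.Ioo_subset_Icc_self ht)).differentiableAt).differentiableWithinAt
    · rw [interior_Icc]
      intro t ht
      rw [(hhder t (Set.Ioo_subset_Icc_self ht)).deriv]
      exact key t (Set.Ioo_subset_Icc_self ht)
  -- conclusion
  intro t ht
  have h0 : (0:ℝ) ∈ Set.Icc (0:ℝ) T := ⟨le_rfl, hT.le⟩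
  have hfin := hmono h0 ht ht.1
  simp only [hhdef] at hfin
  have hJ0 : J 0 = 0 := intervalIntegral.integral_same
  have hgoal : (∫ τ in (0:ℝ)..t,
      (∫ x in (0:ℝ)..1, ε (x, τ) * (deriv (fun y => u (y, τ)) x) ^ 2)) = J t := by
    rw [hJdef]
    apply intervalIntegral.integral_congr
    intro τ hτ
    rw [Set.uIcc_of_le ht.1] at hτ
    have hτT : τ ∈ Set.Icc (0:ℝ) T := ⟨hτ.1, hτ.2.trans ht.2⟩
    simp only [hIdef]
    apply intervalIntegral.integral_congr
    intro x hx
    rw [Set.uIcc_of_le zero_le_one] at hx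
    simp only [(hX x τ (hsub ⟨hx, hτT⟩)).deriv]
  rw [hgoal]
  rw [hJ0, mul_zero, add_zero] at hfin
  exact hfin
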